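/- Let g(t, z) = h(z) t^N + Σ_{i=0}^{N−1} h_i(z) t^i be a polynomial in two variables t, z with complex coefficients, where h(z) is a nonzero real-rooted polynomial. Suppose that for every positive integer t the one-variable polynomial z ↦ g(t, z) is a nonconstant real-rooted polynomial, and that the limit δ = lim_{t→∞} min{x ∈ ℝ : g(t, x) = 0} exists. Then h has a real root and δ = min{x ∈ ℝ : h(x) = 0}. -/

import Mathlib

open Filter

/-- A complex polynomial is real-rooted if all of its roots are real. -/
def RealRootedC (p : Polynomial ℂ) : Prop :=
  ∀ z : ℂ, p.eval z = 0 → z.im = 0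

/-- The complex absolute value, as an absolute value (removed from Mathlib). -/
noncomputable def Complex.abs : AbsoluteValue ℂ ℝ where
  toFun := fun z => ‖z‖
  map_mul' := norm_mul
  nonneg' := norm_nonneg
  eq_zero' := fun _ => norm_eq_zero
  add_le' := norm_add_le

lemma Complex.abs_ofReal (r : ℝ) : Complex.abs (r : ℂ) = |r| := by
  show ‖(r : ℂ)‖ = |r|
  rw [Complex.norm_real, Real.norm_eq_abs]

lemma Complex.continuous_abs : Continuous Complex.abs := continuous_norm

lemma prod_map_le_aux {s : Multiset ℂ} {f g : ℂ → ℝ} (h0 : ∀ r ∈ s, 0 ≤ f r)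
    (hfg : ∀ r ∈ s, f r ≤ g r) : (s.map f).prod ≤ (s.map g).prod := by
  induction s using Multiset.induction with
  | empty => simp
  | cons a s ih =>
    simp only [Multiset.map_cons, Multiset.prod_cons]
    have h0' : ∀ r ∈ s, 0 ≤ f r := fun r hr => h0 r (Multiset.mem_cons_of_mem hr)
    have hfg' : ∀ r ∈ s, f r ≤ g r := fun r hr => hfg r (Multiset.mem_cons_of_mem hr)
    have hprod : 0 ≤ (s.map f).prod := by
      apply Multiset.prod_nonneg
      intro x hx
      obtain ⟨r, hr, rfl⟩ := Multiset.mem_map.mp hx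
      exact h0' r hr
    exact mul_le_mul (hfg a (Multiset.mem_cons_self a s)) (ih h0' hfg') hprod
      (le_trans (h0 a (Multiset.mem_cons_self a s)) (hfg a (Multiset.mem_cons_self a s)))

/-- If all roots of a real-rooted complex polynomial are `≥ s`, then `|p|` is
antitone on `(-∞, s]`. -/
lemma abs_eval_anti (p : Polynomial ℂ) (hrr : RealRootedC p) {s z₁ z₂ : ℝ}
    (hroots : ∀ x : ℝ, p.eval (x : ℂ) = 0 → s ≤ x) (h12 : z₁ ≤ z₂) (h2s : z₂ ≤ s) :
    Complex.abs (p.eval (z₂ : ℂ)) ≤ Complex.abs (p.eval (z₁ : ℂ)) := by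
  have hcard : Multiset.card p.roots = p.natDegree :=
    Polynomial.splits_iff_card_roots.mp (IsAlgClosed.splits p)
  have hfact := Polynomial.C_leadingCoeff_mul_prod_multiset_X_sub_C hcard
  have heval : ∀ z : ℂ, Complex.abs (p.eval z) =
      Complex.abs p.leadingCoeff * ((p.roots.map (fun a => Complex.abs (z - a))).prod) := by
    intro z
    conv_lhs => rw [← hfact]
    rw [Polynomial.eval_mul, Polynomial.eval_C, map_mul, Polynomial.eval_multiset_prod,
      map_multiset_prod, Multiset.map_map, Multiset.map_map]
    simp [Function.comp]
  by_cases hp : p = 0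
  · simp [hp]
  have hkey : ∀ a ∈ p.roots, s ≤ a.re ∧ a.im = 0 := by
    intro a ha
    have haroot : p.eval a = 0 := (Polynomial.isRoot_of_mem_roots ha)
    have him : a.im = 0 := hrr a haroot
    have hae : ((a.re : ℝ) : ℂ) = a := Complex.ext rfl him.symm
    refine ⟨hroots a.re (by rw [hae]; exact haroot), him⟩
  rw [heval, heval]
  apply mul_le_mul_of_nonneg_left _ (Complex.abs.nonneg _)
  apply prod_map_le_aux
  · intro r _; exact Complex.abs.nonneg _
  · intro r hr
    obtain ⟨hsr, himr⟩ := hkey r hr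
    have hre : ((r.re : ℝ) : ℂ) = r := Complex.ext rfl himr.symm
    have e2 : Complex.abs ((z₂ : ℂ) - r) = r.re - z₂ := by
      rw [← hre, ← Complex.ofReal_sub, Complex.abs_ofReal,
        abs_of_nonpos (by linarith : z₂ - r.re ≤ 0)]
      simp
    have e1 : Complex.abs ((z₁ : ℂ) - r) = r.re - z₁ := by
      rw [← hre, ← Complex.ofReal_sub, Complex.abs_ofReal,
        abs_of_nonpos (by linarith : z₁ - r.re ≤ 0)]
      simp
    rw [e1, e2]; linarith

/-- The rescaled polynomials converge to `h` when evaluated along a convergent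
sequence of points. -/
lemma eval_div_tendsto (N : ℕ) (h : Polynomial ℂ) (hi : Fin N → Polynomial ℂ)
    (g : ℕ → Polynomial ℂ)
    (hg : ∀ t : ℕ, g t =
      Polynomial.C ((t : ℂ) ^ N) * h + ∑ i : Fin N, Polynomial.C ((t : ℂ) ^ (i : ℕ)) * hi i)
    (u : ℕ → ℝ) (x : ℝ) (hu : Tendsto u atTop (nhds x)) :
    Tendsto (fun t : ℕ => (g t).eval ((u t : ℝ) : ℂ) / (t : ℂ) ^ N) atTop
      (nhds (h.eval (x : ℂ))) := by
  have hevalc : ∀ p : Polynomial ℂ,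
      Tendsto (fun t => p.eval ((u t : ℝ) : ℂ)) atTop (nhds (p.eval (x : ℂ))) := by
    intro p
    exact ((p.continuous.comp Complex.continuous_ofReal).tendsto x).comp hu
  have hpow : ∀ i : Fin N, Tendsto (fun t : ℕ => (t : ℂ) ^ (i : ℕ) / (t : ℂ) ^ N) atTop
      (nhds 0) := by
    intro i
    have hr : Tendsto (fun t : ℕ => (t : ℝ) ^ (i : ℕ) / (t : ℝ) ^ N) atTop (nhds 0) :=
      (tendsto_pow_div_pow_atTop_zero i.isLt).comp tendsto_natCast_atTop_atTop
    have hcast : ∀ t : ℕ, (((t : ℝ) ^ (i : ℕ) / (t : ℝ) ^ N : ℝ) : ℂ)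
        = (t : ℂ) ^ (i : ℕ) / (t : ℂ) ^ N := by
      intro t; push_cast; ring
    have := (Complex.continuous_ofReal.tendsto 0).comp hr
    simpa only [Function.comp_def, hcast, Complex.ofReal_zero] using this
  have hsum : Tendsto (fun t : ℕ =>
      ∑ i : Fin N, ((t : ℂ) ^ (i : ℕ) / (t : ℂ) ^ N) * (hi i).eval ((u t : ℝ) : ℂ)) atTop
      (nhds 0) := by
    have := tendsto_finset_sum (Finset.univ : Finset (Fin N))
      (fun i _ => (hpow i).mul (hevalc (hi i)))
    simpa using this
  have hmain := (hevalc h).add hsum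
  rw [add_zero] at hmain
  apply hmain.congr'
  filter_upwards [eventually_ge_atTop 1] with t ht
  have ht0 : (t : ℂ) ≠ 0 := Nat.cast_ne_zero.mpr (by omega)
  have htN : ((t : ℂ) ^ N) ≠ 0 := pow_ne_zero _ ht0
  have hev : (g t).eval ((u t : ℝ) : ℂ) =
      (t : ℂ) ^ N * h.eval ((u t : ℝ) : ℂ)
        + ∑ i : Fin N, (t : ℂ) ^ (i : ℕ) * (hi i).eval ((u t : ℝ) : ℂ) := by
    rw [hg t]
    simp [Polynomial.eval_finset_sum]
  rw [hev, add_div, Finset.sum_div]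
  congr 1
  · exact (mul_div_cancel_left₀ _ htN).symm
  · exact Finset.sum_congr rfl fun i _ => (mul_div_right_comm _ _ _).symm

/-- Let `g(t,z) = h(z) tᴺ + Σ_{i<N} h_i(z) tⁱ` with `h` a
nonzero real-rooted polynomial. If for every positive integer `t` the
polynomial `z ↦ g(t,z)` is nonconstant and real-rooted, and its smallest real
root tends to `δ` as `t → ∞`, then `h` has a real root and `δ` is the smallest
real root of `h`. -/
theorem statement6 (N : ℕ) (h : Polynomial ℂ) (hi : Fin N → Polynomial ℂ)
    (g : ℕ → Polynomial ℂ) (δ : ℝ)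
    (hg : ∀ t : ℕ, g t =
      Polynomial.C ((t : ℂ) ^ N) * h + ∑ i : Fin N, Polynomial.C ((t : ℂ) ^ (i : ℕ)) * hi i)
    (hh0 : h ≠ 0) (hhrr : RealRootedC h)
    (hgrr : ∀ t : ℕ, 1 ≤ t → 0 < (g t).natDegree ∧ RealRootedC (g t))
    (hlim : Tendsto (fun t : ℕ => sInf {x : ℝ | (g t).eval (x : ℂ) = 0}) atTop (nhds δ)) :
    (∃ x : ℝ, h.eval (x : ℂ) = 0) ∧ δ = sInf {x : ℝ | h.eval (x : ℂ) = 0} := by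
  set s : ℕ → ℝ := fun t => sInf {x : ℝ | (g t).eval (x : ℂ) = 0} with hs
  -- facts about the root sets of `g t`, `t ≥ 1`
  have hZfin : ∀ t : ℕ, 1 ≤ t → Set.Finite {x : ℝ | (g t).eval (x : ℂ) = 0} := by
    intro t ht
    have hgt0 : g t ≠ 0 := by
      intro h0
      have := (hgrr t ht).1
      rw [h0] at this
      simp at this
    have : {x : ℝ | (g t).eval (x : ℂ) = 0} =
        (fun x : ℝ => (x : ℂ)) ⁻¹' {z : ℂ | (g t).IsRoot z} := rfl
    rw [this]
    exact (Polynomial.finite_setOf_isRoot hgt0).preimage Complex.ofReal_injective.injOn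
  have hZne : ∀ t : ℕ, 1 ≤ t → ({x : ℝ | (g t).eval (x : ℂ) = 0}).Nonempty := by
    intro t ht
    have hdeg : 0 < (g t).degree := Polynomial.natDegree_pos_iff_degree_pos.mp (hgrr t ht).1
    obtain ⟨z, hz⟩ := Complex.exists_root hdeg
    have him : z.im = 0 := (hgrr t ht).2 z hz
    refine ⟨z.re, ?_⟩
    have hze : ((z.re : ℝ) : ℂ) = z := Complex.ext rfl him.symm
    show (g t).eval ((z.re : ℝ) : ℂ) = 0
    rw [hze]; exact hz
  have hsmem : ∀ t : ℕ, 1 ≤ t → (g t).eval ((s t : ℝ) : ℂ) = 0 := by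
    intro t ht
    exact (hZne t ht).csInf_mem (hZfin t ht)
  have hslb : ∀ t : ℕ, 1 ≤ t → ∀ x : ℝ, (g t).eval (x : ℂ) = 0 → s t ≤ x := by
    intro t ht x hx
    exact csInf_le (hZfin t ht).bddBelow hx
  -- Part 1: δ is a root of h
  have hδroot : h.eval (δ : ℂ) = 0 := by
    have h1 : Tendsto (fun t : ℕ => (g t).eval ((s t : ℝ) : ℂ) / (t : ℂ) ^ N) atTop
        (nhds (h.eval (δ : ℂ))) := eval_div_tendsto N h hi g hg s δ hlim
    have h2 : Tendsto (fun t : ℕ => (g t).eval ((s t : ℝ) : ℂ) / (t : ℂ) ^ N) atTop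
        (nhds 0) := by
      apply tendsto_const_nhds.congr'
      filter_upwards [eventually_ge_atTop 1] with t ht
      rw [hsmem t ht, zero_div]
    exact (tendsto_nhds_unique h2 h1).symm
  -- Part 2: δ is the smallest root
  set S : Set ℝ := {x : ℝ | h.eval (x : ℂ) = 0} with hS
  have hSfin : S.Finite := by
    have : S = (fun x : ℝ => (x : ℂ)) ⁻¹' {z : ℂ | h.IsRoot z} := rfl
    rw [this]
    exact (Polynomial.finite_setOf_isRoot hh0).preimage Complex.ofReal_injective.injOn
  have hSne : S.Nonempty := ⟨δ, hδroot⟩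
  have hmmem : sInf S ∈ S := hSne.csInf_mem hSfin
  have hmle : sInf S ≤ δ := csInf_le hSfin.bddBelow hδroot
  refine ⟨⟨δ, hδroot⟩, ?_⟩
  rcases eq_or_lt_of_le hmle with heq | hlt
  · exact heq.symm
  · exfalso
    -- every point of (sInf S, δ) is a root of h
    have hsub : Set.Ioo (sInf S) δ ⊆ S := by
      intro z hz
      have hA : Tendsto (fun t : ℕ => Complex.abs ((g t).eval ((z : ℝ) : ℂ) / (t : ℂ) ^ N))
          atTop (nhds (Complex.abs (h.eval (z : ℂ)))) :=
        (Complex.continuous_abs.tendsto _).comp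
          (eval_div_tendsto N h hi g hg (fun _ => z) z tendsto_const_nhds)
      have hB : Tendsto (fun t : ℕ =>
          Complex.abs ((g t).eval ((sInf S : ℝ) : ℂ) / (t : ℂ) ^ N))
          atTop (nhds (Complex.abs (h.eval ((sInf S : ℝ) : ℂ)))) :=
        (Complex.continuous_abs.tendsto _).comp
          (eval_div_tendsto N h hi g hg (fun _ => sInf S) (sInf S) tendsto_const_nhds)
      have hev : ∀ᶠ t : ℕ in atTop,
          Complex.abs ((g t).eval ((z : ℝ) : ℂ) / (t : ℂ) ^ N) ≤
          Complex.abs ((g t).eval ((sInf S : ℝ) : ℂ) / (t : ℂ) ^ N) := by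
        filter_upwards [eventually_ge_atTop 1, hlim.eventually (lt_mem_nhds hz.2)] with t ht hzs
        have hmono := abs_eval_anti (g t) (hgrr t ht).2 (hslb t ht)
          (le_of_lt hz.1) (le_of_lt hzs)
        have hpos : (0 : ℝ) < Complex.abs ((t : ℂ) ^ N) :=
          AbsoluteValue.pos _ (pow_ne_zero _ (Nat.cast_ne_zero.mpr (by omega)))
        rw [map_div₀, map_div₀]
        gcongr
      have hle : Complex.abs (h.eval (z : ℂ)) ≤ Complex.abs (h.eval ((sInf S : ℝ) : ℂ)) :=
        le_of_tendsto_of_tendsto hA hB hev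
      have : Complex.abs (h.eval ((sInf S : ℝ) : ℂ)) = 0 := by
        rw [show h.eval ((sInf S : ℝ) : ℂ) = 0 from hmmem, map_zero]
      show h.eval ((z : ℝ) : ℂ) = 0
      have := le_antisymm (this ▸ hle) (Complex.abs.nonneg _)
      exact (Complex.abs.eq_zero).mp this
    exact hSfin.not_infinite ((Set.Ioo_infinite hlt).mono hsub)
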